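/- arXiv:math/0612748 — 2 statements merged into one kernel-verified Lean document; each statement's English description precedes it below -/
import Mathlib

section
/- Let f : [n] → [m] be a surjective function and let E = Λ(e_1,…,e_n) be the exterior algebra over ℤ on generators e_1,…,e_n in degree 1. For 1 ≤ j ≤ m set h_j = Σ_{i : f(i)=j} e_i, and let 𝔞_f be the ideal of E generated by h_1,…,h_m. Then the annihilator ann(𝔞_f) = {x ∈ E : x·u = 0 for all u ∈ 𝔞_f} is the principal ideal of E generated by the product a_f = h_1 h_2 ⋯ h_m. -/
noncomputable section

open ExteriorAlgebra

section Lemmas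

variable {R : Type*} {M : Type*} [CommRing R] [AddCommGroup M] [Module R M]

/-- Any element moves past `ι w` at the cost of an involute. -/
lemma mul_iota (a : ExteriorAlgebra R M) (w : M) :
    a * ι R w = ι R w * CliffordAlgebra.involute a := by
  induction a using ExteriorAlgebra.induction with
  | algebraMap r => simp [Algebra.commutes]
  | ι x =>
      rw [CliffordAlgebra.involute_ι, mul_neg]
      exact eq_neg_of_add_eq_zero_left (ExteriorAlgebra.ι_add_mul_swap x w)
  | mul a b ha hb => rw [map_mul, mul_assoc, hb, ← mul_assoc, ha, mul_assoc]
  | add a b ha hb => rw [map_add, add_mul, ha, hb, mul_add]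

lemma prod_mul_iota (L : List M) (u : M) :
    (L.map (ι R)).prod * ι R u = ((-1 : ℤ) ^ L.length) • (ι R u * (L.map (ι R)).prod) := by
  induction L with
  | nil => simp
  | cons w T ih =>
      have hanti : ι R w * ι R u = -(ι R u * ι R w) :=
        eq_neg_of_add_eq_zero_left (ExteriorAlgebra.ι_add_mul_swap w u)
      calc (((w :: T).map (ι R)).prod) * ι R u
          = ι R w * ((T.map (ι R)).prod * ι R u) := by
            simp [mul_assoc]
        _ = ((-1 : ℤ) ^ T.length) • ((ι R w * ι R u) * (T.map (ι R)).prod) := by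
            rw [ih, mul_smul_comm, mul_assoc]
        _ = ((-1 : ℤ) ^ (w :: T).length) • (ι R u * ((w :: T).map (ι R)).prod) := by
            rw [hanti, List.length_cons, pow_succ]
            simp only [List.map_cons, List.prod_cons, neg_mul, smul_neg, ← mul_assoc,
              mul_neg_one, neg_smul, neg_neg]

lemma prod_mul_iota_of_mem {L : List M} {u : M} (hu : u ∈ L) :
    (L.map (ι R)).prod * ι R u = 0 := by
  induction L with
  | nil => simp at hu
  | cons w T ih =>
      rcases List.mem_cons.mp hu with h | h
      · subst h
        calc (((u :: T).map (ι R)).prod) * ι R u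
            = ι R u * ((T.map (ι R)).prod * ι R u) := by simp [mul_assoc]
          _ = ((-1 : ℤ) ^ T.length) • (ι R u * (ι R u * (T.map (ι R)).prod)) := by
              rw [prod_mul_iota, mul_smul_comm]
          _ = 0 := by
              rw [← mul_assoc, ExteriorAlgebra.ι_sq_zero, zero_mul, smul_zero]
      · simp only [List.map_cons, List.prod_cons, mul_assoc, ih h, mul_zero]

/-- Sign-reversal of a product of ι's. -/
lemma reverse_list_prod_iota (L : List M) :
    ∃ s : ℤ, (L.reverse.map (ι R)).prod = s • (L.map (ι R)).prod := by
  induction L with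
  | nil => exact ⟨1, by simp⟩
  | cons w T ih =>
      obtain ⟨s, hprod⟩ := ih
      refine ⟨s * (-1 : ℤ) ^ T.length, ?_⟩
      calc ((w :: T).reverse.map (ι R)).prod
          = (T.reverse.map (ι R)).prod * ι R w := by
            simp [List.reverse_cons]
        _ = s • ((T.map (ι R)).prod * ι R w) := by rw [hprod, smul_mul_assoc]
        _ = s • ((-1 : ℤ) ^ T.length • (ι R w * (T.map (ι R)).prod)) := by
            rw [prod_mul_iota]
        _ = (s * (-1 : ℤ) ^ T.length) • ((w :: T).map (ι R)).prod := by
            rw [smul_smul]; simp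

/-- Key extraction lemma: if `ι (v a) * y = 0` for all `a` in a duplicate-free
list `L` of indices admitting biorthogonal dual functionals, then `y` is a right
multiple of the ordered product of the `ι (v a)`. -/
lemma extract {A : Type*} [DecidableEq A] (v : A → M) (d : A → Module.Dual R M) :
    ∀ L : List A, L.Nodup →
      (∀ a ∈ L, ∀ b ∈ L, d a (v b) = if a = b then 1 else 0) →
      ∀ y : ExteriorAlgebra R M, (∀ a ∈ L, ι R (v a) * y = 0) →
      ∃ w, y = ((L.map fun a => ι R (v a)).prod) * w := by
  intro L
  induction L with
  | nil => exact fun _ _ y _ => ⟨y, by simp⟩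
  | cons a T ih =>
      intro hnd hd y hy
      have hand := List.nodup_cons.mp hnd
      set z := CliffordAlgebra.contractLeft (d a) y with hz
      have hkey : (0 : ExteriorAlgebra R M) = d a (v a) • y - ι R (v a) * z := by
        rw [hz, ← CliffordAlgebra.contractLeft_ι_mul, hy a (by simp), map_zero]
      have hya : y = ι R (v a) * z := by
        have h1 : d a (v a) = 1 := by
          rw [hd a (by simp) a (by simp)]; simp
        rw [h1, one_smul] at hkey
        exact sub_eq_zero.mp hkey.symm
      have hTz : ∀ b ∈ T, ι R (v b) * z = 0 := by
        intro b hb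
        have h0 : d a (v b) = 0 := by
          rw [hd a (by simp) b (by simp [hb])]
          simp only [ite_eq_right_iff]
          intro h; exact absurd (h ▸ hb) hand.1
        have := CliffordAlgebra.contractLeft_ι_mul (d := d a) (v b) y
        rw [hy b (by simp [hb]), map_zero, h0, zero_smul, zero_sub] at this
        exact (neg_eq_zero.mp this.symm)
      obtain ⟨w, hw⟩ := ih hand.2 (fun p hp q hq => hd p (by simp [hp]) q (by simp [hq])) z hTz
      exact ⟨w, by rw [hya, hw]; simp [mul_assoc]⟩

end Lemmas

/-- The `i`-th degree-one generator `eᵢ` of the exterior algebra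
`Λ(e₁,…,eₙ)` over `ℤ`. -/
def extGen (n : ℕ) (i : Fin n) : ExteriorAlgebra ℤ (Fin n → ℤ) :=
  ExteriorAlgebra.ι ℤ (Pi.single i 1)

/-- For a coordinate map `f : [n] → [m]`, the element
`h_j = ∑_{i : f i = j} eᵢ` of the exterior algebra. -/
def hGen {n m : ℕ} (f : Fin n → Fin m) (j : Fin m) :
    ExteriorAlgebra ℤ (Fin n → ℤ) :=
  ∑ i ∈ Finset.univ.filter (fun i => f i = j), extGen n i

/-- The ordered product `a_f = h₁ h₂ ⋯ h_m`. -/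
def aGen {n m : ℕ} (f : Fin n → Fin m) : ExteriorAlgebra ℤ (Fin n → ℤ) :=
  ((List.finRange m).map (hGen f)).prod

/-- For a surjective `f : [n] → [m]`, the annihilator
`{x ∈ E : x * u = 0 for all u in the ideal 𝔞_f generated by h₁,…,h_m}`
is exactly the principal ideal of `E` generated by the product
`a_f = h₁ h₂ ⋯ h_m`. -/
theorem annihilator_of_coordinate_ideal_is_principal {n m : ℕ}
    (f : Fin n → Fin m) (hf : Function.Surjective f) :
    ∀ x : ExteriorAlgebra ℤ (Fin n → ℤ),
      (∀ u ∈ Ideal.span (Set.range (hGen f)), x * u = 0) ↔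
      x ∈ Ideal.span {aGen f} := by
  classical
  -- the vector underlying `hGen f j`
  set v : Fin m → (Fin n → ℤ) :=
    fun j => ∑ i ∈ Finset.univ.filter (fun i => f i = j), Pi.single i 1 with hvdef
  have hv : ∀ j, hGen f j = ExteriorAlgebra.ι ℤ (v j) := by
    intro j; rw [hGen, hvdef]; simp [extGen]
  have hvfun : hGen f = fun j => ExteriorAlgebra.ι ℤ (v j) := funext hv
  -- `aGen` as a product of ι's
  have haGen : aGen f = ((((List.finRange m).map v)).map (ExteriorAlgebra.ι ℤ)).prod := by
    rw [aGen, hvfun, List.map_map]; rfl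
  -- biorthogonal dual functionals via a section of `f`
  set g : Fin m → Fin n := Function.surjInv hf with hg
  set d : Fin m → Module.Dual ℤ (Fin n → ℤ) := fun j => LinearMap.proj (g j) with hd
  have hdv : ∀ j k : Fin m, d j (v k) = if j = k then 1 else 0 := by
    intro j k
    have hfg : f (g j) = j := Function.surjInv_eq hf j
    simp only [hd, LinearMap.proj_apply, hvdef, Finset.sum_apply, Pi.single_apply,
      Finset.sum_ite_eq', Finset.mem_filter, Finset.mem_univ, true_and, hfg]
    rw [Finset.sum_ite_eq]
    simp [Finset.mem_filter, hfg]
  intro x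
  constructor
  · -- hard direction
    intro hx
    have hxh : ∀ j, x * ExteriorAlgebra.ι ℤ (v j) = 0 := by
      intro j
      rw [← hv]
      exact hx _ (Ideal.subset_span ⟨j, rfl⟩)
    set y := CliffordAlgebra.reverse (Q := (0 : QuadraticForm ℤ (Fin n → ℤ))) x with hy
    have hyj : ∀ j ∈ List.finRange m, ExteriorAlgebra.ι ℤ (v j) * y = 0 := by
      intro j _
      have := congrArg (CliffordAlgebra.reverse (Q := (0 : QuadraticForm ℤ (Fin n → ℤ)))) (hxh j)
      rwa [CliffordAlgebra.reverse.map_mul, CliffordAlgebra.reverse_ι, map_zero] at this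
    obtain ⟨w, hw⟩ := extract v d (List.finRange m) (List.nodup_finRange m)
      (fun a _ b _ => hdv a b) y hyj
    -- x = reverse y = reverse w * reverse (aGen f)
    have hprod_eq : (List.map (fun a => ExteriorAlgebra.ι ℤ (v a)) (List.finRange m)).prod
        = aGen f := by rw [haGen, List.map_map]; rfl
    rw [hprod_eq] at hw
    have hx' : x = CliffordAlgebra.reverse (Q := (0 : QuadraticForm ℤ (Fin n → ℤ))) w *
        CliffordAlgebra.reverse (Q := (0 : QuadraticForm ℤ (Fin n → ℤ))) (aGen f) := by
      have := congrArg (CliffordAlgebra.reverse (Q := (0 : QuadraticForm ℤ (Fin n → ℤ)))) hw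
      rw [CliffordAlgebra.reverse_reverse, CliffordAlgebra.reverse.map_mul] at this
      exact this
    obtain ⟨s, hs⟩ := reverse_list_prod_iota (R := ℤ) ((List.finRange m).map v)
    have hrev : CliffordAlgebra.reverse (Q := (0 : QuadraticForm ℤ (Fin n → ℤ))) (aGen f)
        = s • aGen f := by
      rw [haGen, CliffordAlgebra.reverse_prod_map_ι, ← List.map_reverse, hs]
    refine Submodule.mem_span_singleton.mpr
      ⟨s • CliffordAlgebra.reverse (Q := (0 : QuadraticForm ℤ (Fin n → ℤ))) w, ?_⟩
    rw [hx', hrev, smul_eq_mul, smul_mul_assoc, mul_smul_comm]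
  · -- easy direction
    intro hxmem u hu
    obtain ⟨z, hz⟩ := Submodule.mem_span_singleton.mp hxmem
    rw [smul_eq_mul] at hz
    have key : ∀ r : ExteriorAlgebra ℤ (Fin n → ℤ), x * (r * u) = 0 := by
      induction hu using Submodule.span_induction with
      | mem c hc =>
          obtain ⟨j, hj⟩ := hc
          intro r
          have hvmem : v j ∈ (List.finRange m).map v :=
            List.mem_map_of_mem (List.mem_finRange j)
          have hzero : aGen f * ExteriorAlgebra.ι ℤ (v j) = 0 := by
            rw [haGen]; exact prod_mul_iota_of_mem hvmem
          rw [← hj, hv j, mul_iota r (v j), ← hz, mul_assoc, ← mul_assoc (aGen f), hzero,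
            zero_mul, mul_zero]
      | zero => intro r; rw [mul_zero, mul_zero]
      | add a b _ _ ha hb => intro r; rw [mul_add, mul_add, ha, hb, add_zero]
      | smul c a _ h => intro r; rw [smul_eq_mul, ← mul_assoc r c a]; exact h (r * c)
    have := key 1
    rwa [one_mul] at this
end
end

section
/- Let k be a field, K a simplicial complex on [n], and E = Λ_k(e_1,…,e_n) the exterior algebra over k. Let J_K ⊆ E be the ideal generated by the monomials e_σ for σ ∉ K, and let K★ = {σ ⊆ [n] : [n]∖σ ∉ K} be the combinatorial Alexander dual of K. Then the annihilator of J_K in E equals J_{K★}, the ideal generated by the monomials e_τ with τ ∉ K★. -/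
noncomputable section

variable (k : Type) [Field k]

/-- The exterior monomial `e_σ = e_{i₁} ⋯ e_{i_r}` (indices in increasing
order) in the exterior algebra `Λ_k(e₁,…,eₙ)`. -/
def extMonomial {n : ℕ} (σ : Finset (Fin n)) : ExteriorAlgebra k (Fin n → k) :=
  ((σ.sort (· ≤ ·)).map fun i => ExteriorAlgebra.ι k (Pi.single i 1)).prod

/-- The exterior Stanley–Reisner ideal `J_K` of a simplicial complex `K` on
`[n]`: the ideal of the exterior algebra generated by the monomials `e_σ`
with `σ ∉ K`. -/
def extSRIdeal {n : ℕ} (K : Set (Finset (Fin n))) :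
    Ideal (ExteriorAlgebra k (Fin n → k)) :=
  Ideal.span {x | ∃ σ : Finset (Fin n), σ ∉ K ∧ x = extMonomial k σ}

/-- The combinatorial Alexander dual `K★ = {σ ⊆ [n] : [n] ∖ σ ∉ K}`. -/
def alexanderDual {n : ℕ} (K : Set (Finset (Fin n))) : Set (Finset (Fin n)) :=
  {σ | Finset.univ \ σ ∉ K}


namespace ExtSRAux
variable {n : ℕ}

/-- basis vector of the model -/
abbrev bV (σ : Finset (Fin n)) : Finset (Fin n) →₀ k := Finsupp.single σ 1

/-- sign exponent -/
def mE (i : Fin n) (σ : Finset (Fin n)) : ℕ := (σ.filter (· < i)).card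

/-- left multiplication by e_i in the model -/
def Lf (i : Fin n) : (Finset (Fin n) →₀ k) →ₗ[k] (Finset (Fin n) →₀ k) :=
  Finsupp.lift _ k _ (fun σ => if i ∈ σ then 0 else ((-1:k)^(mE i σ)) • bV k (insert i σ))

lemma Lf_single (i : Fin n) (σ : Finset (Fin n)) :
    Lf k i (bV k σ) = if i ∈ σ then 0 else ((-1:k)^(mE i σ)) • bV k (insert i σ) := by
  rw [Lf, Finsupp.lift_apply, Finsupp.sum_single_index (by simp), one_smul]

lemma mE_insert (i j : Fin n) (σ : Finset (Fin n)) (hj : j ∉ σ) :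
    mE i (insert j σ) = mE i σ + (if j < i then 1 else 0) := by
  unfold mE
  rw [Finset.filter_insert]
  split_ifs with h
  · rw [Finset.card_insert_of_notMem (fun hc => hj (Finset.mem_of_mem_filter _ hc))]
  · rfl

end ExtSRAux

namespace ExtSRAux2
open ExtSRAux
variable {n : ℕ}

lemma single_eq_smul_bV (σ : Finset (Fin n)) (b : k) :
    (Finsupp.single σ b : Finset (Fin n) →₀ k) = b • bV k σ := by
  simp [bV, Finsupp.smul_single]

lemma Lf_single' (i : Fin n) (σ : Finset (Fin n)) (b : k) :
    Lf k i (Finsupp.single σ b) =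
      if i ∈ σ then 0 else Finsupp.single (insert i σ) (b * (-1:k)^(mE i σ)) := by
  rw [single_eq_smul_bV, map_smul, Lf_single]
  split_ifs with h
  · simp
  · rw [smul_smul, bV, Finsupp.smul_single, smul_eq_mul, mul_one]

lemma Lf_Lf_single (i j : Fin n) (σ : Finset (Fin n)) (b : k) :
    Lf k i (Lf k j (Finsupp.single σ b)) + Lf k j (Lf k i (Finsupp.single σ b)) = 0 := by
  rcases eq_or_ne i j with rfl | hij
  · rw [Lf_single']
    split_ifs with h
    · simp
    · simp [Lf_single', -Finsupp.single_mul]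
  · by_cases hj : j ∈ σ
    · by_cases hi : i ∈ σ
      · simp [Lf_single', -Finsupp.single_mul, hi, hj]
      · simp [Lf_single', -Finsupp.single_mul, hi, hj, Finset.mem_insert]
    · by_cases hi : i ∈ σ
      · simp [Lf_single', -Finsupp.single_mul, hi, hj, Finset.mem_insert]
      · rw [Lf_single', Lf_single', if_neg hj, if_neg hi, Lf_single', Lf_single',
          if_neg (by simp [hi, hij]), if_neg (by simp [hj, hij.symm]),
          Finset.insert_comm, ← Finsupp.single_add]
        rw [mE_insert _ _ _ hj, mE_insert _ _ _ hi, pow_add, pow_add]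
        refine (congrArg (Finsupp.single (insert j (insert i σ))) ?_).trans (Finsupp.single_zero _)
        rcases lt_or_gt_of_ne hij with h | h
        · rw [if_neg (asymm h), if_pos h]; ring
        · rw [if_pos h, if_neg (asymm h)]; ring

lemma Lf_mul_Lf (i j : Fin n) :
    (Lf k i * Lf k j : Module.End k (Finset (Fin n) →₀ k)) + Lf k j * Lf k i = 0 := by
  apply Finsupp.lhom_ext (fun σ b => ?_)
  simp only [LinearMap.add_apply, Module.End.mul_apply, LinearMap.zero_apply]
  exact Lf_Lf_single k i j σ b

lemma Lf_sq (i : Fin n) : (Lf k i * Lf k i : Module.End k (Finset (Fin n) →₀ k)) = 0 := by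
  apply Finsupp.lhom_ext (fun σ b => ?_)
  simp only [Module.End.mul_apply, LinearMap.zero_apply]
  rw [Lf_single']
  split_ifs with h
  · simp
  · simp [Lf_single', -Finsupp.single_mul]

/-- the generating linear map into endomorphisms -/
def Fg : (Fin n → k) →ₗ[k] Module.End k (Finset (Fin n) →₀ k) :=
  ∑ i : Fin n, (LinearMap.proj i).smulRight (Lf k i)

lemma Fg_apply (v : Fin n → k) : Fg k v = ∑ i : Fin n, v i • Lf k i := by
  simp [Fg]

lemma Fg_sq (v : Fin n → k) : Fg k v * Fg k v = 0 := by
  rw [Fg_apply, Finset.sum_mul_sum]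
  simp_rw [smul_mul_smul_comm]
  rw [← Finset.sum_product']
  refine Finset.sum_ninvolution Prod.swap ?_ ?_ (fun p => Finset.mem_univ _) (fun p => rfl)
  · intro p
    simp only [Prod.fst_swap, Prod.snd_swap]
    rw [mul_comm (v p.2), ← smul_add, Lf_mul_Lf, smul_zero]
  · intro p hp hs
    apply hp
    have h2 : p.2 = p.1 := congrArg Prod.fst hs
    rw [h2, Lf_sq, smul_zero]

end ExtSRAux2

section Part3
open ExtSRAux ExtSRAux2
variable {n : ℕ}

/-- the representation of the exterior algebra on the model -/
def Phi : ExteriorAlgebra k (Fin n → k) →ₐ[k] Module.End k (Finset (Fin n) →₀ k) :=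
  ExteriorAlgebra.lift k ⟨Fg k, Fg_sq k⟩

lemma Phi_ι (v : Fin n → k) : Phi k (ExteriorAlgebra.ι k v) = Fg k v :=
  ExteriorAlgebra.lift_ι_apply _ _ _ v

lemma Fg_e (i : Fin n) : Fg k (Pi.single i (1:k)) = Lf k i := by
  rw [Fg_apply, Finset.sum_eq_single i]
  · simp
  · intro j _ hji
    rw [Pi.single_apply, if_neg hji, zero_smul]
  · intro h; exact absurd (Finset.mem_univ i) h

lemma Phi_list (l : List (Fin n)) (hl : l.Nodup) (τ : Finset (Fin n)) :
    ∃ d : k, (Phi k ((l.map fun i => ExteriorAlgebra.ι k (Pi.single i 1)).prod)) (bV k τ)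
        = d • bV k (l.toFinset ∪ τ) ∧ (d ≠ 0 ↔ Disjoint l.toFinset τ) := by
  induction l with
  | nil => exact ⟨1, by simp, by simp⟩
  | cons a t ih =>
    obtain ⟨d, hd, hdis⟩ := ih (List.Nodup.of_cons hl)
    have ha : a ∉ t := (List.nodup_cons.mp hl).1
    refine ⟨if a ∈ t.toFinset ∪ τ then 0 else d * (-1:k)^(mE a (t.toFinset ∪ τ)), ?_, ?_⟩
    · rw [List.map_cons, List.prod_cons, map_mul, Module.End.mul_apply, hd, map_smul, Phi_ι,
        Fg_e, Lf_single, List.toFinset_cons, Finset.insert_union]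
      split_ifs with h
      · simp
      · rw [smul_smul]
    · rw [List.toFinset_cons]
      split_ifs with h
      · constructor
        · intro h0; exact absurd rfl h0
        · intro hdisj; exfalso
          rcases Finset.mem_union.mp h with h1 | h2
          · exact ha (List.mem_toFinset.mp h1)
          · exact (Finset.disjoint_left.mp hdisj (Finset.mem_insert_self a _)) h2
      · have hne : ((-1:k)^(mE a (t.toFinset ∪ τ))) ≠ 0 :=
          pow_ne_zero _ (neg_ne_zero.mpr one_ne_zero)
        constructor
        · intro h0
          have hd0 : d ≠ 0 := fun hc => h0 (by rw [hc, zero_mul])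
          have hdt : Disjoint t.toFinset τ := hdis.mp hd0
          rw [Finset.disjoint_left]
          intro x hx
          rcases Finset.mem_insert.mp hx with rfl | hx'
          · exact fun hc => h (Finset.mem_union_right _ hc)
          · exact Finset.disjoint_left.mp hdt hx'
        · intro hdisj
          exact mul_ne_zero (hdis.mpr (hdisj.mono_left (Finset.subset_insert a _))) hne

lemma Phi_smul (a : k) (y : ExteriorAlgebra k (Fin n → k)) :
    Phi k (a • y) = a • Phi k y :=
  (Phi k).toLinearMap.map_smul a y

lemma Phi_mono (σ τ : Finset (Fin n)) :
    ∃ d : k, (Phi k (extMonomial k σ)) (bV k τ) = d • bV k (σ ∪ τ)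
      ∧ (d ≠ 0 ↔ Disjoint σ τ) := by
  have h := Phi_list k (σ.sort (· ≤ ·)) (Finset.sort_nodup _ _) τ
  rwa [Finset.sort_toFinset] at h

lemma extMonomial_empty : extMonomial k (∅ : Finset (Fin n)) = 1 := by
  simp [extMonomial]

lemma extMonomial_single (i : Fin n) :
    extMonomial k {i} = ExteriorAlgebra.ι k (Pi.single i 1) := by
  simp [extMonomial, Finset.sort_singleton]

lemma extMonomial_cons (j : Fin n) (σ : Finset (Fin n)) (h : ∀ a ∈ σ, j < a) :
    ExteriorAlgebra.ι k (Pi.single j 1) * extMonomial k σ = extMonomial k (insert j σ) := by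
  have hj : j ∉ σ := fun hc => lt_irrefl j (h j hc)
  rw [extMonomial, extMonomial,
    Finset.sort_insert _ (fun b hb => (h b hb).le) hj, List.map_cons, List.prod_cons]

lemma listProd_eq (l : List (Fin n)) (hl : l.Pairwise (· < ·)) :
    ((l.map fun a => ExteriorAlgebra.ι k (Pi.single a 1)).prod) = extMonomial k l.toFinset := by
  induction l with
  | nil => rw [List.map_nil, List.prod_nil, List.toFinset_nil, extMonomial_empty]
  | cons j t ih =>
    have hjt : ∀ a ∈ t, j < a := (List.pairwise_cons.mp hl).1
    rw [List.map_cons, List.prod_cons, ih (List.pairwise_cons.mp hl).2, List.toFinset_cons,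
      extMonomial_cons k j t.toFinset (fun a haa => hjt a (List.mem_toFinset.mp haa))]

lemma ι_mul_listProd (l : List (Fin n)) (hl : l.Pairwise (· < ·)) (i : Fin n) :
    ∃ c : k, ExteriorAlgebra.ι k (Pi.single i 1) *
        ((l.map fun a => ExteriorAlgebra.ι k (Pi.single a 1)).prod)
      = c • extMonomial k (insert i l.toFinset) ∧ (i ∈ l.toFinset → c = 0) := by
  induction l with
  | nil =>
    refine ⟨1, ?_, by simp⟩
    simp [extMonomial_single, one_smul]
  | cons j t ih =>
    have hjt : ∀ a ∈ t, j < a := (List.pairwise_cons.mp hl).1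
    have hst : t.Pairwise (· < ·) := (List.pairwise_cons.mp hl).2
    rcases lt_trichotomy i j with h | rfl | h
    · refine ⟨1, ?_, ?_⟩
      · rw [listProd_eq k _ hl, one_smul, List.toFinset_cons,
          extMonomial_cons k i _ (fun a haa => ?_)]
        rcases Finset.mem_insert.mp haa with rfl | haa'
        · exact h
        · exact h.trans (hjt a (List.mem_toFinset.mp haa'))
      · intro hmem
        exfalso
        rcases List.mem_cons.mp (List.mem_toFinset.mp hmem) with rfl | hmem'
        · exact lt_irrefl i h
        · exact lt_irrefl i (h.trans (hjt i hmem'))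
    · refine ⟨0, ?_, fun _ => rfl⟩
      rw [List.map_cons, List.prod_cons, ← mul_assoc, ExteriorAlgebra.ι_sq_zero, zero_mul,
        zero_smul]
    · obtain ⟨c, hc, hc0⟩ := ih hst
      refine ⟨-c, ?_, ?_⟩
      · rw [List.toFinset_cons, Finset.insert_comm, List.map_cons, List.prod_cons, ← mul_assoc,
          eq_neg_of_add_eq_zero_left (ExteriorAlgebra.ι_add_mul_swap _ _), neg_mul, mul_assoc,
          hc, mul_smul_comm, extMonomial_cons k j _ (fun a haa => ?_), neg_smul]
        rcases Finset.mem_insert.mp haa with rfl | haa'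
        · exact h
        · exact hjt a (List.mem_toFinset.mp haa')
      · intro hmem
        rcases List.mem_cons.mp (List.mem_toFinset.mp hmem) with rfl | hmem'
        · exact absurd h (lt_irrefl i)
        · rw [hc0 (List.mem_toFinset.mpr hmem'), neg_zero]

lemma ι_mul_extMonomial (i : Fin n) (σ : Finset (Fin n)) :
    ∃ c : k, ExteriorAlgebra.ι k (Pi.single i 1) * extMonomial k σ
      = c • extMonomial k (insert i σ) ∧ (i ∈ σ → c = 0) := by
  have h := ι_mul_listProd k (σ.sort (· ≤ ·)) (Finset.sortedLT_sort σ).pairwise i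
  rwa [Finset.sort_toFinset, ← extMonomial] at h

lemma listProd_mul (l : List (Fin n)) (τ : Finset (Fin n)) :
    ∃ c : k, ((l.map fun a => ExteriorAlgebra.ι k (Pi.single a 1)).prod) * extMonomial k τ
      = c • extMonomial k (l.toFinset ∪ τ) ∧ (¬ Disjoint l.toFinset τ → c = 0) := by
  induction l with
  | nil =>
    refine ⟨1, by simp, fun h => absurd (Finset.disjoint_left.mpr (by simp)) h⟩
  | cons a t ih =>
    obtain ⟨c, hc, hc0⟩ := ih
    obtain ⟨c', hc', hc'0⟩ := ι_mul_extMonomial k a (t.toFinset ∪ τ)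
    refine ⟨c * c', ?_, ?_⟩
    · rw [List.map_cons, List.prod_cons, mul_assoc, hc, mul_smul_comm, hc', smul_smul,
        List.toFinset_cons, Finset.insert_union]
    · intro hnd
      rw [List.toFinset_cons] at hnd
      by_cases hd : Disjoint t.toFinset τ
      · have haτ : a ∈ τ := by
          by_contra haτ
          apply hnd
          rw [Finset.disjoint_left]
          intro x hx
          rcases Finset.mem_insert.mp hx with rfl | hx'
          · exact haτ
          · exact Finset.disjoint_left.mp hd hx'
        rw [hc'0 (Finset.mem_union_right _ haτ), mul_zero]
      · rw [hc0 hd, zero_mul]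

lemma extMonomial_mul (σ τ : Finset (Fin n)) :
    ∃ c : k, extMonomial k σ * extMonomial k τ = c • extMonomial k (σ ∪ τ)
      ∧ (¬ Disjoint σ τ → c = 0) := by
  have h := listProd_mul k (σ.sort (· ≤ ·)) τ
  rwa [Finset.sort_toFinset, ← extMonomial] at h

lemma mem_monomial_span (x : ExteriorAlgebra k (Fin n → k)) :
    x ∈ Submodule.span k (Set.range (extMonomial k (n := n))) := by
  induction x using ExteriorAlgebra.induction with
  | algebraMap r =>
    rw [Algebra.algebraMap_eq_smul_one, ← extMonomial_empty k]
    exact Submodule.smul_mem _ _ (Submodule.subset_span ⟨∅, rfl⟩)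
  | ι v =>
    have hsingle : ∀ i : Fin n, Pi.single i (1:k) = fun j => if i = j then (1:k) else 0 := by
      intro i; ext j; rw [Pi.single_apply]; exact if_congr eq_comm rfl rfl
    have hv : ExteriorAlgebra.ι k v = ∑ i : Fin n, v i • extMonomial k {i} := by
      conv_lhs => rw [pi_eq_sum_univ v]
      rw [map_sum]
      refine Finset.sum_congr rfl (fun i _ => ?_)
      rw [map_smul, extMonomial_single, hsingle i]
    rw [hv]
    exact Submodule.sum_mem _ (fun i _ =>
      Submodule.smul_mem _ _ (Submodule.subset_span ⟨{i}, rfl⟩))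
  | mul a b ha hb =>
    induction ha using Submodule.span_induction with
    | mem y hy =>
      obtain ⟨σ, rfl⟩ := hy
      induction hb using Submodule.span_induction with
      | mem z hz =>
        obtain ⟨τ, rfl⟩ := hz
        obtain ⟨c, hc, _⟩ := extMonomial_mul k σ τ
        rw [hc]
        exact Submodule.smul_mem _ _ (Submodule.subset_span ⟨_, rfl⟩)
      | zero => rw [mul_zero]; exact Submodule.zero_mem _
      | add y z _ _ hy hz => rw [mul_add]; exact Submodule.add_mem _ hy hz
      | smul r y _ hy => rw [mul_smul_comm]; exact Submodule.smul_mem _ _ hy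
    | zero => rw [zero_mul]; exact Submodule.zero_mem _
    | add y z _ _ hy hz => rw [add_mul]; exact Submodule.add_mem _ hy hz
    | smul r y _ hy => rw [smul_mul_assoc]; exact Submodule.smul_mem _ _ hy
  | add a b ha hb => exact Submodule.add_mem _ ha hb

end Part3

section Part4
open ExtSRAux ExtSRAux2
variable {n : ℕ} {K : Set (Finset (Fin n))}

lemma tri_zero (hK : ∀ σ ∈ K, ∀ τ ⊆ σ, τ ∈ K) (τ σ : Finset (Fin n))
    (hτ : Finset.univ \ τ ∈ K) (hσ : σ ∉ K) (y : ExteriorAlgebra k (Fin n → k)) :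
    extMonomial k τ * (y * extMonomial k σ) = 0 := by
  have hnd : ¬ Disjoint τ σ := by
    intro hd
    exact hσ (hK _ hτ σ (fun x hx =>
      Finset.mem_sdiff.mpr ⟨Finset.mem_univ x, Finset.disjoint_right.mp hd hx⟩))
  obtain ⟨i, hiτ, hiσ⟩ := Finset.not_disjoint_iff.mp hnd
  have hy := mem_monomial_span k y
  induction hy using Submodule.span_induction with
  | mem z hz =>
    obtain ⟨μ, rfl⟩ := hz
    obtain ⟨c, hc, _⟩ := extMonomial_mul k μ σ
    rw [hc, mul_smul_comm]
    obtain ⟨c', hc', hc'0⟩ := extMonomial_mul k τ (μ ∪ σ)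
    rw [hc', hc'0 (Finset.not_disjoint_iff.mpr ⟨i, hiτ, Finset.mem_union_right _ hiσ⟩),
      zero_smul, smul_zero]
  | zero => rw [zero_mul, mul_zero]
  | add a b _ _ ha hb => rw [add_mul, mul_add, ha, hb, add_zero]
  | smul r a _ ha => rw [smul_mul_assoc, mul_smul_comm, ha, smul_zero]

lemma mem_dual_anni (hK : ∀ σ ∈ K, ∀ τ ⊆ σ, τ ∈ K)
    {x : ExteriorAlgebra k (Fin n → k)} (hx : x ∈ extSRIdeal k (alexanderDual K)) :
    ∀ u ∈ extSRIdeal k K, x * u = 0 := by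
  induction hx using Submodule.span_induction with
  | mem z hz =>
    obtain ⟨τ, hτ, rfl⟩ := hz
    have hτK : Finset.univ \ τ ∈ K := by
      by_contra hcon
      exact hτ hcon
    intro u hu
    have key : ∀ y, extMonomial k τ * (y * u) = 0 := by
      induction hu using Submodule.span_induction with
      | mem w hw =>
        obtain ⟨σ, hσ, rfl⟩ := hw
        exact fun y => tri_zero k hK τ σ hτK hσ y
      | zero => intro y; rw [mul_zero, mul_zero]
      | add a b _ _ ha hb => intro y; rw [mul_add, mul_add, ha, hb, add_zero]
      | smul r a _ ha =>
        intro y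
        have h7 := ha (y * r)
        rw [mul_assoc y r a] at h7
        rwa [smul_eq_mul]
    have h1 := key 1
    rwa [one_mul] at h1
  | zero => intro u _; rw [zero_mul]
  | add a b _ _ ha hb => intro u hu; rw [add_mul, ha u hu, hb u hu, add_zero]
  | smul r a _ ha => intro u hu; rw [smul_eq_mul, mul_assoc, ha u hu, mul_zero]

end Part4

open ExtSRAux ExtSRAux2

/-- For a field `k` and a simplicial complex `K` on `[n]`,
the annihilator of the exterior Stanley–Reisner ideal `J_K` in the exterior
algebra `E = Λ_k(e₁,…,eₙ)` is the Stanley–Reisner ideal `J_{K★}` of the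
combinatorial Alexander dual of `K`. -/
theorem annihilator_ext_stanley_reisner_eq_alexander_dual {n : ℕ}
    (K : Set (Finset (Fin n))) (hK : ∀ σ ∈ K, ∀ τ ⊆ σ, τ ∈ K) :
    ∀ x : ExteriorAlgebra k (Fin n → k),
      (∀ u ∈ extSRIdeal k K, x * u = 0) ↔ x ∈ extSRIdeal k (alexanderDual K) := by
  classical
  intro x
  constructor
  swap
  · intro hmem u hu
    exact mem_dual_anni k hK hmem u hu
  intro hx
  obtain ⟨c, hc⟩ := Finsupp.mem_span_range_iff_exists_finsupp.mp
    (mem_monomial_span k x)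
  set P : Finset (Fin n) → Prop := fun σ => Finset.univ \ σ ∈ K with hP
  have hxsum : x = ∑ σ ∈ c.support, c σ • extMonomial k σ := by rw [← hc]; rfl
  have hsplit : x = (∑ σ ∈ c.support.filter P, c σ • extMonomial k σ)
      + ∑ σ ∈ c.support.filter (fun σ => ¬ P σ), c σ • extMonomial k σ := by
    rw [hxsum, Finset.sum_filter_add_sum_filter_not]
  have hx1 : (∑ σ ∈ c.support.filter P, c σ • extMonomial k σ)
      ∈ extSRIdeal k (alexanderDual K) := by
    refine Submodule.sum_mem _ (fun σ hσ =>
      Submodule.smul_of_tower_mem _ _ (Ideal.subset_span ⟨σ, ?_, rfl⟩))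
    intro hdual
    exact hdual (Finset.mem_filter.mp hσ).2
  have hbad : ∀ σ₀ ∈ c.support.filter (fun σ => ¬ P σ),
      c σ₀ • extMonomial k σ₀ = (0 : ExteriorAlgebra k (Fin n → k)) := by
    intro σ₀ hσ₀
    obtain ⟨hsupp, hPn⟩ := Finset.mem_filter.mp hσ₀
    have hτJ : extMonomial k (Finset.univ \ σ₀) ∈ extSRIdeal k K :=
      Ideal.subset_span ⟨Finset.univ \ σ₀, hPn, rfl⟩
    set τ : Finset (Fin n) := Finset.univ \ σ₀ with hτdef
    set xb := ∑ σ ∈ c.support.filter (fun σ => ¬ P σ), c σ • extMonomial k σ with hxb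
    have h2 : xb * extMonomial k τ = 0 := by
      have hxu : x * extMonomial k τ = 0 := hx _ hτJ
      have hx1u : (∑ σ ∈ c.support.filter P, c σ • extMonomial k σ) * extMonomial k τ = 0 :=
        mem_dual_anni k hK hx1 _ hτJ
      have hsum : x * extMonomial k τ
          = (∑ σ ∈ c.support.filter P, c σ • extMonomial k σ) * extMonomial k τ
            + xb * extMonomial k τ := by
        rw [← add_mul, ← hsplit]
      rw [hxu, hx1u, zero_add] at hsum
      exact hsum.symm
    obtain ⟨d0, hd0, hd0ne⟩ := Phi_mono k τ ∅
    rw [Finset.union_empty] at hd0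
    have h3 : (Phi k xb) (bV k τ) = 0 := by
      have h4 := congrArg (fun f : Module.End k (Finset (Fin n) →₀ k) => f (bV k ∅))
        (congrArg (Phi k) h2)
      simp only [map_mul, map_zero, Module.End.mul_apply, LinearMap.zero_apply] at h4
      rw [hd0, map_smul] at h4
      have hd0' : d0 ≠ 0 := hd0ne.mpr (Finset.disjoint_empty_right τ)
      exact (smul_eq_zero.mp h4).resolve_left hd0'
    have h3' : ((Phi k) (∑ σ ∈ c.support.filter (fun σ => ¬ P σ),
        c σ • extMonomial k σ)) (bV k τ) = 0 := h3
    rw [map_sum, LinearMap.sum_apply] at h3'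
    have h5 := DFunLike.congr_fun h3' Finset.univ
    rw [Finsupp.finset_sum_apply, Finsupp.zero_apply] at h5
    have hterm0 : ∀ σ ∈ c.support.filter (fun σ => ¬ P σ), σ ≠ σ₀ →
        ((Phi k (c σ • extMonomial k σ)) (bV k τ)) Finset.univ = 0 := by
      intro σ _ hne
      obtain ⟨d, hd, hdne⟩ := Phi_mono k σ τ
      rw [Phi_smul, LinearMap.smul_apply, hd]
      by_cases hu : σ ∪ τ = Finset.univ
      · have hsub : σ₀ ⊆ σ := by
          intro a ha
          rcases Finset.mem_union.mp (hu ▸ Finset.mem_univ a) with h | h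
          · exact h
          · exact absurd (Finset.mem_sdiff.mp h).2 (not_not.mpr ha)
        have hss : σ₀ ⊂ σ := hsub.ssubset_of_ne (Ne.symm hne)
        obtain ⟨i, hiσ, hiσ₀⟩ := Finset.exists_of_ssubset hss
        have hd00 : d = 0 := by
          by_contra hd0
          exact (Finset.disjoint_left.mp (hdne.mp hd0) hiσ)
            (Finset.mem_sdiff.mpr ⟨Finset.mem_univ i, hiσ₀⟩)
        rw [hd00, zero_smul, smul_zero]
        rfl
      · rw [Finsupp.smul_apply, Finsupp.smul_apply, Finsupp.single_apply, if_neg hu,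
          smul_zero, smul_zero]
    rw [Finset.sum_eq_single_of_mem σ₀ hσ₀ hterm0] at h5
    obtain ⟨d1, hd1, hd1ne⟩ := Phi_mono k σ₀ τ
    have huniv : σ₀ ∪ τ = Finset.univ := by
      rw [hτdef]
      exact Finset.union_sdiff_of_subset (Finset.subset_univ σ₀)
    rw [Phi_smul, LinearMap.smul_apply, hd1, huniv, Finsupp.smul_apply, Finsupp.smul_apply,
      Finsupp.single_eq_same] at h5
    have hd1' : d1 ≠ 0 := hd1ne.mpr (by rw [hτdef]; exact Finset.disjoint_sdiff)
    have hcc : c σ₀ = 0 := by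
      have h6 : c σ₀ * (d1 * 1) = 0 := h5
      rcases mul_eq_zero.mp h6 with h | h
      · exact h
      · exact absurd (by rwa [mul_one] at h) hd1'
    rw [hcc, zero_smul]
  have hzero : (∑ σ ∈ c.support.filter (fun σ => ¬ P σ), c σ • extMonomial k σ)
      = (0 : ExteriorAlgebra k (Fin n → k)) := Finset.sum_eq_zero hbad
  rw [hsplit, hzero, add_zero]
  exact hx1
end
end
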